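/- Let Φ : (0,∞) → ℝ have the Thomas–Fermi potential properties and let λ > 0. Then the function μ ↦ e_G(λ,μ) is differentiable at every μ > 0 with derivative ∂_μ e_G(λ,μ) = n(λ,μ), and at μ = 0 it has the (finite) right-hand derivative n(λ,0) = κ(λ). -/

import Mathlib

open MeasureTheory Real Filter Set

/-- The semiclassical grand canonical energy
`e_G(λ,μ) = −(2/(3π)) ∫₀^∞ (Φ(r) − λ²r⁻² − μ)₊^{3/2} dr`. -/
noncomputable def eG (Φ : ℝ → ℝ) (lam μ : ℝ) : ℝ :=
  -(2 / (3 * π)) * ∫ r in Ioi (0:ℝ), (max (Φ r - lam ^ 2 / r ^ 2 - μ) 0) ^ ((3:ℝ)/2)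

/-- The semiclassical counting function
`n(λ,μ) = (1/π) ∫₀^∞ (Φ(r) − λ²r⁻² − μ)₊^{1/2} dr`. -/
noncomputable def nSC (Φ : ℝ → ℝ) (lam μ : ℝ) : ℝ :=
  (1 / π) * ∫ r in Ioi (0:ℝ), (max (Φ r - lam ^ 2 / r ^ 2 - μ) 0) ^ ((1:ℝ)/2)

/-- `Φ` has the Thomas–Fermi potential properties: continuous and positive on `(0,∞)`,
`r·Φ(r) → 1` as `r → 0+`, and `Φ(r) ≤ C r⁻⁴` for `r ≥ 1`. -/
def HasTF (Φ : ℝ → ℝ) : Prop :=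
  ContinuousOn Φ (Ioi 0) ∧ (∀ r, 0 < r → 0 < Φ r) ∧
  Tendsto (fun r => r * Φ r) (nhdsWithin 0 (Ioi 0)) (nhds 1) ∧
  ∃ C, 0 < C ∧ ∀ r, 1 ≤ r → Φ r ≤ C / r ^ 4


lemma aux_pp_deriv (s : ℝ) :
    HasDerivAt (fun x : ℝ => max x 0 ^ ((3:ℝ)/2)) ((3/2) * max s 0 ^ ((1:ℝ)/2)) s := by
  rcases lt_trichotomy s 0 with hs | hs | hs
  · have hmax : max s 0 = 0 := max_eq_right hs.le
    rw [hmax, Real.zero_rpow (by norm_num), mul_zero]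
    have hev : (fun x : ℝ => max x 0 ^ ((3:ℝ)/2)) =ᶠ[nhds s] fun _ => (0:ℝ) := by
      filter_upwards [eventually_lt_nhds hs] with x hx
      rw [max_eq_right hx.le, Real.zero_rpow (by norm_num)]
    exact (hasDerivAt_const s 0).congr_of_eventuallyEq hev
  · subst hs
    rw [max_self, Real.zero_rpow (by norm_num), mul_zero]
    rw [hasDerivAt_iff_tendsto_slope]
    apply squeeze_zero_norm' (a := fun x => |x| ^ ((1:ℝ)/2))
    · filter_upwards [self_mem_nhdsWithin] with x (hx : x ≠ 0)
      have h0 : max (0:ℝ) 0 ^ ((3:ℝ)/2) = 0 := by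
        rw [max_self, Real.zero_rpow (by norm_num)]
      have hle : max x 0 ≤ |x| := max_le (le_abs_self x) (abs_nonneg x)
      have h32 : max x 0 ^ ((3:ℝ)/2) ≤ |x| ^ ((3:ℝ)/2) :=
        Real.rpow_le_rpow (le_max_right x 0) hle (by norm_num)
      have habs : |x| ^ ((3:ℝ)/2) = |x| * |x| ^ ((1:ℝ)/2) := by
        rw [show (3:ℝ)/2 = 1 + 1/2 by norm_num, Real.rpow_add (abs_pos.2 hx), Real.rpow_one]
      rw [slope_def_field, h0, sub_zero, sub_zero]
      rw [div_eq_mul_inv, norm_mul, norm_inv]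
      calc ‖max x 0 ^ ((3:ℝ)/2)‖ * ‖x‖⁻¹
          ≤ (|x| * |x| ^ ((1:ℝ)/2)) * |x|⁻¹ := by
            apply mul_le_mul _ le_rfl (by positivity) (by positivity)
            rw [Real.norm_eq_abs, abs_of_nonneg (Real.rpow_nonneg (le_max_right x 0) _)]
            exact h32.trans habs.le
        _ = |x| ^ ((1:ℝ)/2) * (|x| * |x|⁻¹) := by ring
        _ = |x| ^ ((1:ℝ)/2) := by
            rw [mul_inv_cancel₀ (abs_ne_zero.2 hx), mul_one]
    · have : Tendsto (fun x : ℝ => |x| ^ ((1:ℝ)/2)) (nhds 0) (nhds (|0| ^ ((1:ℝ)/2))) := by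
        exact (Real.continuousAt_rpow_const _ _ (Or.inr (by norm_num))).comp
          continuous_abs.continuousAt
      rw [abs_zero, Real.zero_rpow (by norm_num)] at this
      exact this.mono_left nhdsWithin_le_nhds
  · have hmax : max s 0 = s := max_eq_left hs.le
    have h := Real.hasDerivAt_rpow_const (x := s) (p := (3:ℝ)/2) (Or.inl hs.ne')
    have hev : (fun x : ℝ => max x 0 ^ ((3:ℝ)/2)) =ᶠ[nhds s] fun x => x ^ ((3:ℝ)/2) := by
      filter_upwards [eventually_gt_nhds hs] with x hx
      rw [max_eq_left hx.le]
    rw [hmax]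
    have : (3:ℝ)/2 - 1 = 1/2 := by norm_num
    rw [this] at h
    exact h.congr_of_eventuallyEq hev

lemma aux_cont_pp (p : ℝ) (hp : 0 < p) : Continuous (fun x : ℝ => max x 0 ^ p) := by
  apply continuous_iff_continuousAt.2 (fun x => ?_)
  exact (Real.continuousAt_rpow_const _ _ (Or.inr hp.le)).comp
    ((continuous_max.comp (continuous_id.prodMk continuous_const)).continuousAt)

/-- For a Thomas–Fermi potential `Φ` and `λ > 0`, the map `μ ↦ e_G(λ,μ)` is
differentiable at every `μ > 0` with derivative `n(λ,μ)`, and has right-hand derivative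
`n(λ,0) = κ(λ)` at `μ = 0`. -/

theorem eG_hasDerivAt (Φ : ℝ → ℝ) (hΦ : HasTF Φ) (lam : ℝ) (hlam : 0 < lam) :
    (∀ μ : ℝ, 0 < μ → HasDerivAt (fun t => eG Φ lam t) (nSC Φ lam μ) μ) ∧
    HasDerivWithinAt (fun t => eG Φ lam t) (nSC Φ lam 0) (Ici 0) 0 := by
  obtain ⟨hcont, hpos, hlim, C, hCpos, hCb⟩ := hΦ
  -- small r : r * Φ r ≤ 2 eventually
  have h2 : ∀ᶠ r in nhdsWithin (0:ℝ) (Ioi 0), r * Φ r ≤ 2 :=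
    hlim.eventually (eventually_le_nhds one_lt_two)
  rw [eventually_nhdsWithin_iff] at h2
  obtain ⟨δ, hδpos, hδ⟩ := Metric.eventually_nhds_iff.mp h2
  set r₀ : ℝ := min (δ/2) (lam^2/2) with hr0def
  have hr0pos : 0 < r₀ := lt_min (by linarith) (by positivity)
  have hsmall : ∀ r, 0 < r → r ≤ r₀ → Φ r - lam^2/r^2 ≤ 0 := by
    intro r hr hrr
    have hrδ : dist r 0 < δ := by
      rw [Real.dist_eq, sub_zero, abs_of_pos hr]
      have := min_le_left (δ/2) (lam^2/2)
      linarith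
    have h1 : r * Φ r ≤ 2 := hδ hrδ hr
    have hΦle : Φ r ≤ 2 / r := by
      rw [le_div_iff₀ hr]; linarith [mul_comm r (Φ r)]
    have hrl : r ≤ lam^2/2 := hrr.trans (min_le_right _ _)
    have h3 : 2/r ≤ lam^2/r^2 := by
      rw [div_le_div_iff₀ hr (by positivity)]
      nlinarith
    linarith
  set R : ℝ := max (max 1 (Real.sqrt C / lam)) (r₀ + 1) with hRdef
  have hr0R : r₀ < R := lt_of_lt_of_le (lt_add_one r₀) (le_max_right _ _)
  have hbig : ∀ r, R ≤ r → Φ r - lam^2/r^2 ≤ 0 := by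
    intro r hRr
    have h1 : (1:ℝ) ≤ r := le_trans ((le_max_left _ _).trans (le_max_left _ _)) hRr
    have hr : (0:ℝ) < r := by linarith
    have hΦr := hCb r h1
    have hsq : Real.sqrt C ≤ r * lam := by
      have h4 : Real.sqrt C / lam ≤ r :=
        le_trans ((le_max_right _ _).trans (le_max_left _ _)) hRr
      rwa [div_le_iff₀ hlam] at h4
    have hCle : C ≤ lam^2 * r^2 := by
      have := mul_self_le_mul_self (Real.sqrt_nonneg C) hsq
      rw [Real.mul_self_sqrt hCpos.le] at this
      nlinarith
    have h5 : C / r^4 ≤ lam^2 / r^2 := by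
      rw [div_le_div_iff₀ (by positivity) (by positivity)]
      nlinarith
    linarith
  have hS : Icc r₀ R ⊆ Ioi (0:ℝ) := fun r hr => lt_of_lt_of_le hr0pos hr.1
  -- vanishing outside [r₀, R]
  have hvan : ∀ t : ℝ, 0 ≤ t → ∀ r ∈ Ioi (0:ℝ) \ Icc r₀ R,
      max (Φ r - lam^2/r^2 - t) 0 = 0 := by
    rintro t ht r ⟨hr, hr'⟩
    have hg : Φ r - lam^2/r^2 ≤ 0 := by
      rcases not_and_or.mp (fun h => hr' ⟨h.1, h.2⟩) with h | h
      · exact hsmall r hr (le_of_not_ge h)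
      · exact hbig r (le_of_not_ge h)
    exact max_eq_right (by linarith)
  have heq : ∀ (p : ℝ), 0 < p → ∀ t : ℝ, 0 ≤ t →
      (∫ r in Ioi (0:ℝ), max (Φ r - lam^2/r^2 - t) 0 ^ p)
        = ∫ r in Icc r₀ R, max (Φ r - lam^2/r^2 - t) 0 ^ p := by
    intro p hp t ht
    apply setIntegral_eq_of_subset_of_forall_diff_eq_zero measurableSet_Ioi hS
    intro r hr
    rw [hvan t ht r hr, Real.zero_rpow hp.ne']
  -- continuity of integrands on Icc
  have hgcont : ∀ t : ℝ, ContinuousOn (fun r => Φ r - lam^2/r^2 - t) (Icc r₀ R) := by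
    intro t
    apply ContinuousOn.sub _ continuousOn_const
    exact (hcont.mono hS).sub (continuousOn_const.div
      (continuousOn_pow 2) (fun r hr => ne_of_gt (pow_pos (hS hr) 2)))
  have hFcont : ∀ (p : ℝ), 0 < p → ∀ t : ℝ,
      ContinuousOn (fun r => max (Φ r - lam^2/r^2 - t) 0 ^ p) (Icc r₀ R) := by
    intro p hp t
    exact (aux_cont_pp p hp).comp_continuousOn (hgcont t)
  have hmeas : ∀ (p : ℝ), 0 < p → ∀ t : ℝ,
      AEStronglyMeasurable (fun r => max (Φ r - lam^2/r^2 - t) 0 ^ p)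
        (volume.restrict (Icc r₀ R)) :=
    fun p hp t => (hFcont p hp t).aestronglyMeasurable measurableSet_Icc
  have hint : ∀ (p : ℝ), 0 < p → ∀ t : ℝ,
      IntegrableOn (fun r => max (Φ r - lam^2/r^2 - t) 0 ^ p) (Icc r₀ R) :=
    fun p hp t => (hFcont p hp t).integrableOn_compact isCompact_Icc
  -- bound for Φ on Icc
  obtain ⟨M, hM⟩ := isCompact_Icc.exists_bound_of_continuousOn (hcont.mono hS)
  have hM0 : 0 ≤ M := le_trans (norm_nonneg _) (hM r₀ ⟨le_rfl, hr0R.le⟩)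
  -- key derivative of the localized integral
  have key : ∀ t₀ : ℝ,
      HasDerivAt (fun t => ∫ r in Icc r₀ R, max (Φ r - lam^2/r^2 - t) 0 ^ ((3:ℝ)/2))
        (∫ r in Icc r₀ R, -((3:ℝ)/2) * max (Φ r - lam^2/r^2 - t₀) 0 ^ ((1:ℝ)/2)) t₀ := by
    intro t₀
    set B : ℝ := (3:ℝ)/2 * (M + |t₀| + 1) ^ ((1:ℝ)/2) with hBdef
    have hmono : ∀ t ∈ Metric.ball t₀ 1, ∀ r ∈ Icc r₀ R,
        max (Φ r - lam^2/r^2 - t) 0 ≤ M + |t₀| + 1 := by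
      intro t ht r hr
      have h1 : ‖Φ r‖ ≤ M := hM r hr
      have h2 : Φ r ≤ M := (le_abs_self _).trans h1
      have h3 : |t - t₀| < 1 := by
        rw [Metric.mem_ball, Real.dist_eq] at ht; exact ht
      have h4 : -t ≤ |t₀| + 1 := by
        have := abs_sub_abs_le_abs_sub t t₀
        have := neg_abs_le t
        have := abs_nonneg t
        nlinarith [neg_abs_le t, abs_nonneg t₀]
      have h5 : lam^2/r^2 ≥ 0 := by positivity
      apply max_le _ (by positivity)
      linarith
    have h_diff : ∀ᵐ r ∂(volume.restrict (Icc r₀ R)), ∀ t ∈ Metric.ball t₀ 1,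
        HasDerivAt (fun t => max (Φ r - lam^2/r^2 - t) 0 ^ ((3:ℝ)/2))
          (-((3:ℝ)/2) * max (Φ r - lam^2/r^2 - t) 0 ^ ((1:ℝ)/2)) t := by
      apply Eventually.of_forall
      intro r t _
      have hinner : HasDerivAt (fun t : ℝ => Φ r - lam^2/r^2 - t) (-1) t := by
        simpa using (hasDerivAt_id' t).const_sub (Φ r - lam^2/r^2)
      have houter := aux_pp_deriv (Φ r - lam^2/r^2 - t)
      have := houter.comp t hinner
      refine this.congr_deriv ?_
      ring
    have h_bound : ∀ᵐ r ∂(volume.restrict (Icc r₀ R)), ∀ t ∈ Metric.ball t₀ 1,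
        ‖-((3:ℝ)/2) * max (Φ r - lam^2/r^2 - t) 0 ^ ((1:ℝ)/2)‖ ≤ B := by
      rw [ae_restrict_iff' measurableSet_Icc]
      apply Eventually.of_forall
      intro r hr t ht
      have hb := hmono t ht r hr
      have h0 : (0:ℝ) ≤ max (Φ r - lam^2/r^2 - t) 0 := le_max_right _ _
      have hle : max (Φ r - lam^2/r^2 - t) 0 ^ ((1:ℝ)/2) ≤ (M + |t₀| + 1) ^ ((1:ℝ)/2) :=
        Real.rpow_le_rpow h0 hb (by norm_num)
      rw [norm_mul, Real.norm_eq_abs, Real.norm_eq_abs,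
        abs_of_nonneg (Real.rpow_nonneg h0 _)]
      have : |(-((3:ℝ)/2))| = (3:ℝ)/2 := by rw [abs_neg, abs_of_pos]; norm_num
      rw [this, hBdef]
      nlinarith [Real.rpow_nonneg h0 ((1:ℝ)/2)]
    have hres := hasDerivAt_integral_of_dominated_loc_of_deriv_le
      (F := fun t r => max (Φ r - lam^2/r^2 - t) 0 ^ ((3:ℝ)/2))
      (F' := fun t r => -((3:ℝ)/2) * max (Φ r - lam^2/r^2 - t) 0 ^ ((1:ℝ)/2))
      (bound := fun _ => B) (Metric.ball_mem_nhds t₀ zero_lt_one)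
      (Eventually.of_forall (fun t => hmeas ((3:ℝ)/2) (by norm_num) t))
      (hint ((3:ℝ)/2) (by norm_num) t₀)
      ((hmeas ((1:ℝ)/2) (by norm_num) t₀).const_mul _)
      h_bound
      (integrableOn_const measure_Icc_lt_top.ne)
      h_diff
    exact hres.2
  -- derivative of the localized eG
  have hG : ∀ t₀ : ℝ,
      HasDerivAt (fun t => -(2/(3*π)) * ∫ r in Icc r₀ R, max (Φ r - lam^2/r^2 - t) 0 ^ ((3:ℝ)/2))
        ((1/π) * ∫ r in Icc r₀ R, max (Φ r - lam^2/r^2 - t₀) 0 ^ ((1:ℝ)/2)) t₀ := by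
    intro t₀
    have h := (key t₀).const_mul (-(2/(3*π)))
    have hπ : π ≠ 0 := Real.pi_ne_zero
    refine h.congr_deriv ?_
    rw [integral_const_mul]
    field_simp
  -- rewrite eG and nSC in localized form for t ≥ 0
  have hEeq : ∀ t : ℝ, 0 ≤ t → eG Φ lam t
      = -(2/(3*π)) * ∫ r in Icc r₀ R, max (Φ r - lam^2/r^2 - t) 0 ^ ((3:ℝ)/2) := by
    intro t ht
    rw [eG, heq ((3:ℝ)/2) (by norm_num) t ht]
  have hneq : ∀ t : ℝ, 0 ≤ t → nSC Φ lam t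
      = (1/π) * ∫ r in Icc r₀ R, max (Φ r - lam^2/r^2 - t) 0 ^ ((1:ℝ)/2) := by
    intro t ht
    rw [nSC, heq ((1:ℝ)/2) (by norm_num) t ht]
  constructor
  · intro μ hμ
    rw [hneq μ hμ.le]
    apply (hG μ).congr_of_eventuallyEq
    filter_upwards [eventually_gt_nhds hμ] with t ht
    exact hEeq t ht.le
  · rw [hneq 0 le_rfl]
    exact ((hG 0).hasDerivWithinAt).congr (fun t ht => hEeq t ht) (hEeq 0 le_rfl)
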